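/- Let X be a metrizable space and q ∈ ℤ≥0. Then the set Neb_q(X) of all metrics d ∈ Met(X) for which there exists a q-nebula A with all values of d lying in A is an open subset of the space (Met(X), D_X). -/
import Mathlib


open Set
open scoped ENNReal

/-- The space `Met(X)` of metrics generating the topology of `X`. -/
def MetricCompat (X : Type*) [t : TopologicalSpace X] : Type _ :=
  { m : MetricSpace X // m.toUniformSpace.toTopologicalSpace = t }

namespace MetricCompat

variable {X : Type*} [TopologicalSpace X]

/-- The distance function of an element of `Met(X)`. -/
noncomputable def dist (d : MetricCompat X) (x y : X) : ℝ := d.1.dist x y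

/-- The supremum distance `D_X`, valued in `[0,∞]`. -/
noncomputable def supDist (d e : MetricCompat X) : ℝ≥0∞ :=
  ⨆ p : X × X, ENNReal.ofReal |d.dist p.1 p.2 - e.dist p.1 p.2|

/-- The topology on `Met(X)` induced by the open balls of `D_X`. -/
noncomputable instance : TopologicalSpace (MetricCompat X) :=
  TopologicalSpace.generateFrom
    { U | ∃ (d : MetricCompat X) (r : ℝ≥0∞), 0 < r ∧ U = { e | supDist d e < r } }

end MetricCompat

/-- A space is strongly `0`-dimensional if disjoint closed sets are separated by a clopen set. -/
def StronglyZeroDim (X : Type*) [TopologicalSpace X] : Prop :=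
  ∀ A B : Set X, IsClosed A → IsClosed B → Disjoint A B →
    ∃ V : Set X, IsClopen V ∧ A ⊆ V ∧ Disjoint V B

/-- A closed subset `A` of `[0,∞)` is a `q`-nebula if it is a disjoint union of closed
intervals `I 0, …, I k` with `0 ∈ I 0`, the intervals `I 0, …, I (k-1)` compact of diameter
`< 2^{-q}`, and `I k` an unbounded closed interval contained in `(q, ∞)`. -/
def IsNebula (q : ℕ) (A : Set ℝ) : Prop :=
  IsClosed A ∧ A ⊆ Set.Ici 0 ∧
  ∃ (k : ℕ) (I : Fin (k + 1) → Set ℝ),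
    A = ⋃ i, I i ∧
    (0 : ℝ) ∈ I 0 ∧
    (∀ i : Fin (k + 1), (i : ℕ) < k →
      ∃ a b : ℝ, a ≤ b ∧ I i = Set.Icc a b ∧ b - a < (2 : ℝ) ^ (-(q : ℤ))) ∧
    (∃ a : ℝ, I (Fin.last k) = Set.Ici a ∧ (q : ℝ) < a) ∧
    Pairwise (Function.onFun Disjoint I)

theorem key_lemma
    {X : Type*} [TopologicalSpace X] (q : ℕ) (d : MetricCompat X)
    (hd : ∃ A : Set ℝ, IsNebula q A ∧ ∀ x y : X, d.dist x y ∈ A) :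
    ∃ ε : ℝ, 0 < ε ∧ ∀ e : MetricCompat X,
      MetricCompat.supDist d e < ENNReal.ofReal ε →
      ∃ A : Set ℝ, IsNebula q A ∧ ∀ x y : X, e.dist x y ∈ A := by
  obtain ⟨A, ⟨hAcl, hA0, k, I, hAeq, h0I, hIcc, ⟨c, hlast, hcq⟩, hdisj⟩, hval⟩ := hd
  choose a b hab hIeq hdiam using hIcc
  have hIsub : ∀ i, I i ⊆ A := by intro i; rw [hAeq]; exact Set.subset_iUnion I i
  have hclosed : ∀ i, IsClosed (I i) := by
    intro i
    by_cases h : (i : ℕ) < k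
    · rw [hIeq i h]; exact isClosed_Icc
    · have : i = Fin.last k := Fin.ext (by have := i.isLt; simp [Fin.last]; omega)
      rw [this, hlast]; exact isClosed_Ici
  have hnn : ∀ (i : Fin (k+1)) (h : (i : ℕ) < k), 0 ≤ a i h := by
    intro i h
    exact hA0 (hIsub i ((hIeq i h) ▸ Set.left_mem_Icc.2 (hab i h)))
  -- separation of the intervals
  have hδ : ∀ p : Fin (k+1) × Fin (k+1), ∃ t, 0 < t ∧ (p.1 ≠ p.2 →
      Disjoint (Metric.thickening t (I p.1)) (Metric.thickening t (I p.2))) := by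
    rintro ⟨i, j⟩
    by_cases hij : i = j
    · exact ⟨1, one_pos, fun h => absurd hij h⟩
    · have hdij : Disjoint (I i) (I j) := hdisj hij
      by_cases hik : (i : ℕ) < k
      · have hcomp : IsCompact (I i) := by rw [hIeq i hik]; exact isCompact_Icc
        obtain ⟨t, ht, htd⟩ := hdij.exists_thickenings hcomp (hclosed j)
        exact ⟨t, ht, fun _ => htd⟩
      · have hi : i = Fin.last k := Fin.ext (by have := i.isLt; simp [Fin.last]; omega)
        have hjk : (j : ℕ) < k := by
          by_contra hj
          exact hij (hi.trans (Fin.ext (by have := j.isLt; simp [Fin.last]; omega)).symm)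
        have hcomp : IsCompact (I j) := by rw [hIeq j hjk]; exact isCompact_Icc
        obtain ⟨t, ht, htd⟩ := hdij.symm.exists_thickenings hcomp (hclosed i)
        exact ⟨t, ht, fun _ => htd.symm⟩
  choose δ hδpos hδdisj using hδ
  set f : Fin (k+1) → ℝ := fun i =>
    if h : (i : ℕ) < k then ((2:ℝ) ^ (-(q:ℤ)) - (b i h - a i h)) / 2 else 1 with hf
  have hfpos : ∀ i, 0 < f i := by
    intro i
    rw [hf]
    dsimp only
    split
    · have := hdiam i ‹_›; linarith
    · norm_num
  have hne1 : (Finset.univ : Finset (Fin (k+1) × Fin (k+1))).Nonempty := Finset.univ_nonempty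
  have hne2 : (Finset.univ : Finset (Fin (k+1))).Nonempty := Finset.univ_nonempty
  set ε0 : ℝ := min (min (Finset.univ.inf' hne1 δ) (Finset.univ.inf' hne2 f)) ((c - q)/2) with hε0
  have hε0pos : 0 < ε0 := by
    refine lt_min (lt_min ?_ ?_) (by linarith)
    · exact (Finset.lt_inf'_iff _).2 fun p _ => hδpos p
    · exact (Finset.lt_inf'_iff _).2 fun i _ => hfpos i
  set ε : ℝ := ε0 / 2 with hεdef
  have hεpos : 0 < ε := by positivity
  have hεδ : ∀ p, ε < δ p := by
    intro p
    calc ε < ε0 := by linarith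
    _ ≤ _ := le_trans (le_trans (min_le_left _ _) (min_le_left _ _))
        (Finset.inf'_le _ (Finset.mem_univ p))
  have hεf : ∀ i, ε0 ≤ f i := fun i =>
    le_trans (le_trans (min_le_left _ _) (min_le_right _ _))
      (Finset.inf'_le _ (Finset.mem_univ i))
  have hεc : ε0 ≤ (c - q)/2 := min_le_right _ _
  have hqc : (q : ℝ) < c - ε := by linarith
  set I' : Fin (k+1) → Set ℝ := fun i =>
    if h : (i : ℕ) < k then Set.Icc (max (a i h - ε) 0) (b i h + ε) else Set.Ici (c - ε)
    with hI'
  have hthick : ∀ i, ∀ t : ℝ, ε < t → I' i ⊆ Metric.thickening t (I i) := by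
    intro i t ht x hx
    rw [Metric.mem_thickening_iff]
    rw [hI'] at hx
    dsimp only at hx
    by_cases h : (i : ℕ) < k
    · rw [dif_pos h] at hx
      obtain ⟨hx1, hx2⟩ := hx
      have hx1' : a i h - ε ≤ x := le_trans (le_max_left _ _) hx1
      rw [hIeq i h]
      rcases le_total x (a i h) with hc1 | hc1
      · exact ⟨a i h, Set.left_mem_Icc.2 (hab i h), by rw [Real.dist_eq, abs_sub_lt_iff]; constructor <;> linarith⟩
      rcases le_total (b i h) x with hc2 | hc2
      · exact ⟨b i h, Set.right_mem_Icc.2 (hab i h), by rw [Real.dist_eq, abs_sub_lt_iff]; constructor <;> linarith⟩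
      · exact ⟨x, ⟨hc1, hc2⟩, by rw [Real.dist_eq, abs_sub_lt_iff]; constructor <;> linarith⟩
    · rw [dif_neg h] at hx
      have hi : i = Fin.last k := Fin.ext (by have := i.isLt; simp [Fin.last]; omega)
      rw [hi, hlast]
      rcases le_total c x with hc1 | hc1
      · exact ⟨x, hc1, by rw [Real.dist_eq, abs_sub_lt_iff]; constructor <;> linarith⟩
      · exact ⟨c, le_refl c, by rw [Real.dist_eq, abs_sub_lt_iff]; constructor <;> linarith [hx.out]⟩
  have hsub : ∀ i, I i ⊆ I' i := by
    intro i
    rw [hI']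
    dsimp only
    by_cases h : (i : ℕ) < k
    · rw [dif_pos h, hIeq i h]
      exact Set.Icc_subset_Icc (max_le (by linarith) (hnn i h)) (by linarith)
    · rw [dif_neg h]
      have hi : i = Fin.last k := Fin.ext (by have := i.isLt; simp [Fin.last]; omega)
      rw [hi, hlast]
      exact Set.Ici_subset_Ici.2 (by linarith)
  refine ⟨ε, hεpos, fun e he => ⟨⋃ i, I' i, ⟨?_, ?_, k, I', rfl, hsub 0 h0I, ?_, ?_, ?_⟩, ?_⟩⟩
  · exact isClosed_iUnion_of_finite fun i => by
      rw [hI']; dsimp only; split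
      · exact isClosed_Icc
      · exact isClosed_Ici
  · refine Set.iUnion_subset fun i x hx => ?_
    rw [hI'] at hx; dsimp only at hx
    by_cases h : (i : ℕ) < k
    · rw [dif_pos h] at hx
      exact le_trans (le_max_right _ _) hx.1
    · rw [dif_neg h] at hx
      have : (0:ℝ) ≤ (q:ℝ) := Nat.cast_nonneg q
      have := hx.out
      simp only [Set.mem_Ici]
      linarith
  · intro i h
    refine ⟨max (a i h - ε) 0, b i h + ε, ?_, by rw [hI']; dsimp only; rw [dif_pos h], ?_⟩
    · exact max_le (by linarith [hab i h]) (by linarith [hnn i h, hab i h])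
    · have h1 : a i h - ε ≤ max (a i h - ε) 0 := le_max_left _ _
      have h2 : ε0 ≤ ((2:ℝ) ^ (-(q:ℤ)) - (b i h - a i h)) / 2 := by
        have := hεf i
        rw [hf] at this
        dsimp only at this
        rwa [dif_pos h] at this
      have := hdiam i h
      linarith
  · refine ⟨c - ε, ?_, hqc⟩
    rw [hI']
    dsimp only
    rw [dif_neg (by simp [Fin.last])]
  · intro i j hij
    exact Disjoint.mono (hthick i (δ (i, j)) (hεδ _)) (hthick j (δ (i, j)) (hεδ _))
      (hδdisj (i, j) hij)
  · intro x y
    have hb : ENNReal.ofReal |d.dist x y - e.dist x y| < ENNReal.ofReal ε :=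
      lt_of_le_of_lt (le_iSup (fun p : X × X =>
        ENNReal.ofReal |d.dist p.1 p.2 - e.dist p.1 p.2|) (x, y)) he
    have habs : |d.dist x y - e.dist x y| < ε :=
      (ENNReal.ofReal_lt_ofReal_iff hεpos).1 hb
    rw [abs_sub_lt_iff] at habs
    have henn : 0 ≤ e.dist x y := @dist_nonneg X e.1.toPseudoMetricSpace x y
    have hdm : d.dist x y ∈ A := hval x y
    rw [hAeq, Set.mem_iUnion] at hdm
    obtain ⟨i, hi⟩ := hdm
    rw [Set.mem_iUnion]
    refine ⟨i, ?_⟩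
    rw [hI']
    dsimp only
    by_cases h : (i : ℕ) < k
    · rw [dif_pos h]
      rw [hIeq i h] at hi
      exact ⟨max_le (by linarith [hi.1]) henn, by linarith [hi.2]⟩
    · rw [dif_neg h]
      have hieq : i = Fin.last k := Fin.ext (by have := i.isLt; simp [Fin.last]; omega)
      rw [hieq, hlast] at hi
      have := hi.out
      simp only [Set.mem_Ici]
      linarith

/-- Proposition 2.16: for a metrizable space `X` and `q ∈ ℤ≥0`, the set `Neb_q(X)` of metrics
taking values in some `q`-nebula is open in `(Met(X), D_X)`. -/
theorem nebula_valued_metrics_isOpen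
    {X : Type*} [TopologicalSpace X] [TopologicalSpace.MetrizableSpace X] (q : ℕ) :
    IsOpen { d : MetricCompat X | ∃ A : Set ℝ, IsNebula q A ∧ ∀ x y : X, d.dist x y ∈ A } := by
  set S := { d : MetricCompat X | ∃ A : Set ℝ, IsNebula q A ∧ ∀ x y : X, d.dist x y ∈ A }
    with hSdef
  set G : Set (Set (MetricCompat X)) :=
    { U | ∃ (d : MetricCompat X) (r : ℝ≥0∞), 0 < r ∧ U = { e | MetricCompat.supDist d e < r } }
    with hGdef
  have hself : ∀ (d : MetricCompat X) (r : ℝ≥0∞), 0 < r → MetricCompat.supDist d d < r := by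
    intro d r hr
    have h0 : MetricCompat.supDist d d = 0 := by
      simp [MetricCompat.supDist]
    rw [h0]; exact hr
  have hmain : S = ⋃₀ {U | U ∈ G ∧ U ⊆ S} := by
    apply Set.Subset.antisymm
    · intro d hd
      obtain ⟨ε, hε, hball⟩ := key_lemma q d hd
      exact Set.mem_sUnion.2 ⟨{e | MetricCompat.supDist d e < ENNReal.ofReal ε},
        ⟨⟨d, ENNReal.ofReal ε, ENNReal.ofReal_pos.2 hε, rfl⟩, fun e he => hball e he⟩,
        hself d _ (ENNReal.ofReal_pos.2 hε)⟩
    · exact Set.sUnion_subset fun U hU => hU.2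
  rw [hmain]
  exact TopologicalSpace.GenerateOpen.sUnion _ fun U hU =>
    TopologicalSpace.GenerateOpen.basic U hU.1
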